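/- Let $u : \mathcal{Q} \to \u{\mathcal{Q}}$ be a continuous monotone map between two copies of the unit square $[0,1]^2$, equal to the identity on $\partial\mathcal{Q}$. Then for every closed connected set $\u{C} \subseteq \u{\mathcal{Q}}$ such that $\u{\mathcal{Q}} \setminus \u{C}$ is connected, the set $C = u^{-1}(\u{C}) \subseteq \mathcal{Q}$ is closed, connected, and $\mathcal{Q} \setminus C$ is connected. -/
import Mathlib


open Set

noncomputable def Qsq : Set (ℝ × ℝ) := Icc (0:ℝ) 1 ×ˢ Icc (0:ℝ) 1

/-- **Counter-images of non-disconnecting connected sets under monotone maps.**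
Let `u : Q → Q`, `Q = [0,1]²`, be a continuous monotone map (every fiber over a point
of `Q` is a connected subset of `Q`) equal to the identity on `∂Q`.  Then for every closed
connected set `C ⊆ Q` with `Q \ C` connected, the counter-image `u⁻¹(C) ∩ Q` is closed,
connected, and its complement in `Q` is connected. -/
theorem monotone_preimage_connected_not_disconnecting
    (u : ℝ × ℝ → ℝ × ℝ) (hc : ContinuousOn u Qsq) (hmaps : MapsTo u Qsq Qsq)
    (hbd : ∀ x ∈ frontier Qsq, u x = x)
    (hmono : ∀ P ∈ Qsq, IsConnected (Qsq ∩ u ⁻¹' {P}))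
    (C : Set (ℝ × ℝ)) (hCclosed : IsClosed C) (hCconn : IsConnected C)
    (hCsub : C ⊆ Qsq) (hCcompl : IsConnected (Qsq \ C)) :
    IsClosed (Qsq ∩ u ⁻¹' C) ∧ IsConnected (Qsq ∩ u ⁻¹' C) ∧
      IsConnected (Qsq \ (Qsq ∩ u ⁻¹' C)) := by
  classical
  have hQc : IsCompact Qsq := isCompact_Icc.prod isCompact_Icc
  have hQcl : IsClosed Qsq := isClosed_Icc.prod isClosed_Icc
  have hKcl : IsClosed (Qsq ∩ u ⁻¹' C) :=
    hc.preimage_isClosed_of_isClosed hQcl hCclosed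
  set K := Qsq ∩ u ⁻¹' C with hKdef
  have hKQ : K ⊆ Qsq := inter_subset_left
  have img_closed : ∀ A : Set (ℝ × ℝ), A ⊆ Qsq → IsClosed A → IsClosed (u '' A) := by
    intro A hAQ hAcl
    exact ((hQc.of_isClosed_subset hAcl hAQ).image_of_continuousOn (hc.mono hAQ)).isClosed
  -- K is connected
  have hKconn : IsConnected K := by
    obtain ⟨P0, hP0C⟩ := hCconn.nonempty
    obtain ⟨x0, hx0Q, hx0P⟩ := (hmono P0 (hCsub hP0C)).nonempty
    have hux0 : u x0 = P0 := hx0P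
    refine ⟨⟨x0, hx0Q, show u x0 ∈ C by rw [hux0]; exact hP0C⟩, ?_⟩
    rw [isPreconnected_closed_iff]
    intro F G hF hG hcov hneF hneG
    by_contra hempty
    rw [not_nonempty_iff_eq_empty] at hempty
    have fibK : ∀ P ∈ C, Qsq ∩ u ⁻¹' {P} ⊆ K := by
      rintro P hP x ⟨hxQ, hxP⟩
      rw [mem_preimage, mem_singleton_iff] at hxP
      exact ⟨hxQ, show u x ∈ C by rw [hxP]; exact hP⟩
    have dich : ∀ P ∈ C, Qsq ∩ u ⁻¹' {P} ⊆ F ∨ Qsq ∩ u ⁻¹' {P} ⊆ G := by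
      intro P hP
      have hsub : Qsq ∩ u ⁻¹' {P} ⊆ F ∪ G := fun x hx => hcov (fibK P hP hx)
      by_contra hnot
      push_neg at hnot
      obtain ⟨a, haf, haF⟩ := not_subset.mp hnot.1
      obtain ⟨b, hbf, hbG⟩ := not_subset.mp hnot.2
      obtain ⟨z, hzf, hzFG⟩ := isPreconnected_closed_iff.mp
        (hmono P (hCsub hP)).isPreconnected F G hF hG hsub
        ⟨b, hbf, (hsub hbf).resolve_right hbG⟩
        ⟨a, haf, (hsub haf).resolve_left haF⟩
      have : z ∈ K ∩ (F ∩ G) := ⟨fibK P hP hzf, hzFG⟩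
      rw [hempty] at this
      exact this
    have hAcl : IsClosed (u '' (K ∩ F)) :=
      img_closed _ (inter_subset_left.trans hKQ) (hKcl.inter hF)
    have hBcl : IsClosed (u '' (K ∩ G)) :=
      img_closed _ (inter_subset_left.trans hKQ) (hKcl.inter hG)
    have hCcov : C ⊆ u '' (K ∩ F) ∪ u '' (K ∩ G) := by
      intro P hP
      obtain ⟨x, hxQ, hxP⟩ := (hmono P (hCsub hP)).nonempty
      have hux : u x = P := hxP
      have hxfib : x ∈ Qsq ∩ u ⁻¹' {P} := ⟨hxQ, hxP⟩
      have hxK : x ∈ K := fibK P hP hxfib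
      rcases dich P hP with h | h
      · exact Or.inl ⟨x, ⟨hxK, h hxfib⟩, hux⟩
      · exact Or.inr ⟨x, ⟨hxK, h hxfib⟩, hux⟩
    have hne1 : (C ∩ u '' (K ∩ F)).Nonempty := by
      obtain ⟨x, hxK, hxF⟩ := hneF
      exact ⟨u x, hxK.2, ⟨x, ⟨hxK, hxF⟩, rfl⟩⟩
    have hne2 : (C ∩ u '' (K ∩ G)).Nonempty := by
      obtain ⟨x, hxK, hxG⟩ := hneG
      exact ⟨u x, hxK.2, ⟨x, ⟨hxK, hxG⟩, rfl⟩⟩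
    obtain ⟨P, hPC, hPA, hPB⟩ := isPreconnected_closed_iff.mp
      hCconn.isPreconnected _ _ hAcl hBcl hCcov hne1 hne2
    obtain ⟨a, ⟨haK, haF⟩, haP⟩ := hPA
    obtain ⟨b, ⟨hbK, hbG⟩, hbP⟩ := hPB
    rcases dich P hPC with h | h
    · have hbF : b ∈ F := h ⟨hbK.1, by rw [mem_preimage, mem_singleton_iff]; exact hbP⟩
      have : b ∈ K ∩ (F ∩ G) := ⟨hbK, hbF, hbG⟩
      rw [hempty] at this
      exact this
    · have haG : a ∈ G := h ⟨haK.1, by rw [mem_preimage, mem_singleton_iff]; exact haP⟩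
      have : a ∈ K ∩ (F ∩ G) := ⟨haK, haF, haG⟩
      rw [hempty] at this
      exact this
  -- Qsq \ K is connected
  have hcompl : IsConnected (Qsq \ K) := by
    have fibD : ∀ P ∈ Qsq \ C, Qsq ∩ u ⁻¹' {P} ⊆ Qsq \ K := by
      rintro P hP x ⟨hxQ, hxP⟩
      rw [mem_preimage, mem_singleton_iff] at hxP
      refine ⟨hxQ, fun hxK => hP.2 ?_⟩
      rw [← hxP]; exact hxK.2
    obtain ⟨P0, hP0⟩ := hCcompl.nonempty
    obtain ⟨x0, hx0Q, hx0P⟩ := (hmono P0 hP0.1).nonempty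
    refine ⟨⟨x0, fibD P0 hP0 ⟨hx0Q, hx0P⟩⟩, ?_⟩
    intro U V hU hV hcov hneU hneV
    by_contra hempty
    rw [not_nonempty_iff_eq_empty] at hempty
    have dich : ∀ P ∈ Qsq \ C, Qsq ∩ u ⁻¹' {P} ⊆ U ∨ Qsq ∩ u ⁻¹' {P} ⊆ V := by
      intro P hP
      have hsub : Qsq ∩ u ⁻¹' {P} ⊆ U ∪ V := fun x hx => hcov (fibD P hP hx)
      by_contra hnot
      push_neg at hnot
      obtain ⟨a, haf, haU⟩ := not_subset.mp hnot.1
      obtain ⟨b, hbf, hbV⟩ := not_subset.mp hnot.2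
      obtain ⟨z, hzf, hzUV⟩ := (hmono P hP.1).isPreconnected U V hU hV hsub
        ⟨b, hbf, (hsub hbf).resolve_right hbV⟩
        ⟨a, haf, (hsub haf).resolve_left haU⟩
      have : z ∈ (Qsq \ K) ∩ (U ∩ V) := ⟨fibD P hP hzf, hzUV⟩
      rw [hempty] at this
      exact this
    -- open sets on the image side
    have hAopen : IsOpen (u '' (Qsq \ U))ᶜ :=
      (img_closed _ diff_subset (hQcl.sdiff hU)).isOpen_compl
    have hBopen : IsOpen (u '' (Qsq \ V))ᶜ :=
      (img_closed _ diff_subset (hQcl.sdiff hV)).isOpen_compl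
    have memA : ∀ P, (Qsq ∩ u ⁻¹' {P} ⊆ U) → P ∈ (u '' (Qsq \ U))ᶜ := by
      intro P hfib hPim
      obtain ⟨x, hx, hux⟩ := hPim
      exact hx.2 (hfib ⟨hx.1, by rw [mem_preimage, mem_singleton_iff]; exact hux⟩)
    have memB : ∀ P, (Qsq ∩ u ⁻¹' {P} ⊆ V) → P ∈ (u '' (Qsq \ V))ᶜ := by
      intro P hfib hPim
      obtain ⟨x, hx, hux⟩ := hPim
      exact hx.2 (hfib ⟨hx.1, by rw [mem_preimage, mem_singleton_iff]; exact hux⟩)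
    have memA' : ∀ P ∈ Qsq, P ∈ (u '' (Qsq \ U))ᶜ → Qsq ∩ u ⁻¹' {P} ⊆ U := by
      rintro P _ hPA x ⟨hxQ, hxP⟩
      rw [mem_preimage, mem_singleton_iff] at hxP
      by_contra hxU
      exact hPA ⟨x, ⟨hxQ, hxU⟩, hxP⟩
    have memB' : ∀ P ∈ Qsq, P ∈ (u '' (Qsq \ V))ᶜ → Qsq ∩ u ⁻¹' {P} ⊆ V := by
      rintro P _ hPB x ⟨hxQ, hxP⟩
      rw [mem_preimage, mem_singleton_iff] at hxP
      by_contra hxV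
      exact hPB ⟨x, ⟨hxQ, hxV⟩, hxP⟩
    have hDcov : Qsq \ C ⊆ (u '' (Qsq \ U))ᶜ ∪ (u '' (Qsq \ V))ᶜ := by
      intro P hP
      rcases dich P hP with h | h
      · exact Or.inl (memA P h)
      · exact Or.inr (memB P h)
    have hne1 : ((Qsq \ C) ∩ (u '' (Qsq \ U))ᶜ).Nonempty := by
      obtain ⟨x, hxD, hxU⟩ := hneU
      have hPQ : u x ∈ Qsq := hmaps hxD.1
      have hPD : u x ∈ Qsq \ C := ⟨hPQ, fun hxC => hxD.2 ⟨hxD.1, hxC⟩⟩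
      have hxfib : x ∈ Qsq ∩ u ⁻¹' {u x} := ⟨hxD.1, rfl⟩
      rcases dich (u x) hPD with h | h
      · exact ⟨u x, hPD, memA _ h⟩
      · exfalso
        have : x ∈ (Qsq \ K) ∩ (U ∩ V) := ⟨hxD, hxU, h hxfib⟩
        rw [hempty] at this
        exact this
    have hne2 : ((Qsq \ C) ∩ (u '' (Qsq \ V))ᶜ).Nonempty := by
      obtain ⟨x, hxD, hxV⟩ := hneV
      have hPQ : u x ∈ Qsq := hmaps hxD.1
      have hPD : u x ∈ Qsq \ C := ⟨hPQ, fun hxC => hxD.2 ⟨hxD.1, hxC⟩⟩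
      have hxfib : x ∈ Qsq ∩ u ⁻¹' {u x} := ⟨hxD.1, rfl⟩
      rcases dich (u x) hPD with h | h
      · exfalso
        have : x ∈ (Qsq \ K) ∩ (U ∩ V) := ⟨hxD, h hxfib, hxV⟩
        rw [hempty] at this
        exact this
      · exact ⟨u x, hPD, memB _ h⟩
    obtain ⟨P, hPD, hPA, hPB⟩ := hCcompl.isPreconnected _ _ hAopen hBopen hDcov hne1 hne2
    obtain ⟨z, hzf⟩ := (hmono P hPD.1).nonempty
    have : z ∈ (Qsq \ K) ∩ (U ∩ V) :=
      ⟨fibD P hPD hzf, memA' P hPD.1 hPA hzf, memB' P hPD.1 hPB hzf⟩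
    rw [hempty] at this
    exact this
  exact ⟨hKcl, hKconn, hcompl⟩
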